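/- The backward auxiliary function φ← is convex on (0,∞) and the forward auxiliary function φ→ is concave on (0,∞). -/

import Mathlib

open Real Set Filter Topology

/-- κ = √γ / α with α = (γ-1)/2. -/
noncomputable def kappa (γ : ℝ) : ℝ := Real.sqrt γ / ((γ - 1) / 2)

/-- The shock branch x ↦ √((1 - x^{-1/α})(x^{γ/α} - 1)), α = (γ-1)/2. -/
noncomputable def shockPart (γ : ℝ) (x : ℝ) : ℝ :=
  Real.sqrt ((1 - x ^ (-(1 : ℝ) / ((γ - 1) / 2))) * (x ^ (γ / ((γ - 1) / 2)) - 1))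

/-- Backward auxiliary function φ← : rarefaction branch κ(x-1) for x ≤ 1,
    shock branch for x ≥ 1 (they agree, with value 0, at x = 1). -/
noncomputable def phiB (γ : ℝ) (x : ℝ) : ℝ :=
  if x ≤ 1 then kappa γ * (x - 1) else shockPart γ x

/-- Forward auxiliary function φ→ : shock branch -√(...) for x ≤ 1,
    rarefaction branch κ(x-1) for x ≥ 1 (they agree, with value 0, at x = 1). -/
noncomputable def phiF (γ : ℝ) (x : ℝ) : ℝ :=
  if x < 1 then -shockPart γ x else kappa γ * (x - 1)

namespace Aux2

/-- `g(x) = x^{a+2} + x^{-a} - x² - 1`, so that `g = (1 - x^{-a})(x^{a+2} - 1)`. -/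
noncomputable def gg (a x : ℝ) : ℝ := x ^ (a+2) + x ^ (-a) - x*x - 1

/-- first derivative of `g` -/
noncomputable def g1 (a x : ℝ) : ℝ := (a+2)*x^(a+1) - a*x^(-a-1) - 2*x

/-- second derivative of `g` -/
noncomputable def g2 (a x : ℝ) : ℝ := (a+2)*(a+1)*x^a + a*(a+1)*x^(-a-2) - 2

noncomputable def Wf (a x : ℝ) : ℝ := a*x^(a+2) + (a+2)*x^(-a) - (2*a+2)

noncomputable def Ff (a x : ℝ) : ℝ := (a+2)*x^(a+2) + a*x^(-a) - 2*(a+1)*(x*x)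

/-- the derivative of the shock branch `√g` -/
noncomputable def df (a x : ℝ) : ℝ := g1 a x / (2 * Real.sqrt (gg a x))

variable {a x : ℝ}

lemma rpow_two' (hx : 0 < x) : x ^ (2:ℝ) = x * x := by
  rw [show (2:ℝ) = ((2:ℕ):ℝ) by norm_num, Real.rpow_natCast]; ring

lemma hXY (hx : 0 < x) : x ^ (a+2) * x ^ (-a) = x * x := by
  rw [← Real.rpow_add hx, show a + 2 + -a = (2:ℝ) by ring, rpow_two' hx]

lemma hshiftA (hx : 0 < x) : x ^ (a+1) * x = x ^ (a+2) := by
  have h := Real.rpow_add hx (a+1) 1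
  rw [Real.rpow_one] at h
  rw [show a+2 = a+1+1 by ring, h]

lemma hshiftB (hx : 0 < x) : x ^ (-a-1) * x = x ^ (-a) := by
  have h := Real.rpow_add hx (-a-1) 1
  rw [Real.rpow_one] at h
  rw [← h]; congr 1; ring

lemma hshiftC (hx : 0 < x) : x ^ a * (x * x) = x ^ (a+2) := by
  rw [← rpow_two' hx, ← Real.rpow_add hx]

lemma hshiftD (hx : 0 < x) : x ^ (-a-2) * (x * x) = x ^ (-a) := by
  rw [← rpow_two' hx, ← Real.rpow_add hx, show -a-2+2 = -a by ring]

lemma xg1_eq (hx : 0 < x) :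
    x * g1 a x = (a+2)*x^(a+2) - a*x^(-a) - 2*(x*x) := by
  unfold g1
  linear_combination (a+2) * hshiftA (a := a) hx - a * hshiftB (a := a) hx

lemma x2g2_eq (hx : 0 < x) :
    (x*x) * g2 a x = (a+2)*(a+1)*x^(a+2) + a*(a+1)*x^(-a) - 2*(x*x) := by
  unfold g2
  linear_combination (a+2)*(a+1) * hshiftC (a := a) hx + a*(a+1) * hshiftD (a := a) hx

lemma gg_factor (hx : 0 < x) : gg a x = (1 - x^(-a)) * (x^(a+2) - 1) := by
  have h := hXY (a := a) hx
  unfold gg; linear_combination h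

lemma gg_one : gg a 1 = 0 := by simp [gg]

lemma gg_pos (ha : 0 < a) (hx : 0 < x) (hne : x ≠ 1) : 0 < gg a x := by
  rw [gg_factor hx]
  rcases lt_or_gt_of_ne hne with h | h
  · have h1 : 1 < x ^ (-a) := by
      rw [Real.one_lt_rpow_iff_of_pos hx]
      exact Or.inr ⟨h, by linarith⟩
    have h2 : x ^ (a+2) < 1 := Real.rpow_lt_one hx.le h (by linarith)
    exact mul_pos_of_neg_of_neg (by linarith) (by linarith)
  · have h1 : x ^ (-a) < 1 := Real.rpow_lt_one_of_one_lt_of_neg h (by linarith)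
    have h2 : 1 < x ^ (a+2) := by
      rw [Real.one_lt_rpow_iff_of_pos hx]
      exact Or.inl ⟨h, by linarith⟩
    exact mul_pos (by linarith) (by linarith)

lemma gg_nonneg (ha : 0 < a) (hx : 0 < x) : 0 ≤ gg a x := by
  rcases eq_or_ne x 1 with h | h
  · simp [h, gg_one]
  · exact (gg_pos ha hx h).le

lemma hasDerivAt_gg (hx : 0 < x) : HasDerivAt (gg a) (g1 a x) x := by
  have h1 : HasDerivAt (fun y : ℝ => y ^ (a+2)) ((a+2) * x ^ (a+2-1)) x :=
    Real.hasDerivAt_rpow_const (Or.inl hx.ne')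
  have h2 : HasDerivAt (fun y : ℝ => y ^ (-a)) ((-a) * x ^ (-a-1)) x :=
    Real.hasDerivAt_rpow_const (Or.inl hx.ne')
  have h3 : HasDerivAt (fun y : ℝ => y * y) (1 * x + x * 1) x :=
    (hasDerivAt_id x).mul (hasDerivAt_id x)
  have H := ((h1.add h2).sub h3).sub_const 1
  have hv : g1 a x = (a+2) * x ^ (a+2-1) + (-a) * x ^ (-a-1) - (1 * x + x * 1) := by
    rw [show a+2-1 = a+1 by ring]; unfold g1; ring
  rw [hv]; exact H

lemma hasDerivAt_g1 (hx : 0 < x) : HasDerivAt (g1 a) (g2 a x) x := by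
  have h1 : HasDerivAt (fun y : ℝ => y ^ (a+1)) ((a+1) * x ^ (a+1-1)) x :=
    Real.hasDerivAt_rpow_const (Or.inl hx.ne')
  have h2 : HasDerivAt (fun y : ℝ => y ^ (-a-1)) ((-a-1) * x ^ (-a-1-1)) x :=
    Real.hasDerivAt_rpow_const (Or.inl hx.ne')
  have H := ((h1.const_mul (a+2)).sub (h2.const_mul a)).sub ((hasDerivAt_id x).const_mul 2)
  have hv : g2 a x = (a+2) * ((a+1) * x ^ (a+1-1)) - a * ((-a-1) * x ^ (-a-1-1)) - 2 * 1 := by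
    rw [show a+1-1 = a by ring, show -a-1-1 = -a-2 by ring]; unfold g2; ring
  rw [hv]; exact H

lemma hasDerivAt_sqrt_gg (ha : 0 < a) (hx : 0 < x) (hne : x ≠ 1) :
    HasDerivAt (fun y => Real.sqrt (gg a y)) (df a x) x := by
  have h := (Real.hasDerivAt_sqrt (gg_pos ha hx hne).ne').comp x (hasDerivAt_gg hx)
  have e : 1 / (2 * Real.sqrt (gg a x)) * g1 a x = df a x := by unfold df; ring
  rw [← e]; exact h

/-- Identity 1: `(x g')² = 4a(a+2) x² g + F²`. -/
lemma key1 (hx : 0 < x) :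
    (x * g1 a x)^2 = 4*(a*(a+2))*(x*x)*(gg a x) + (Ff a x)^2 := by
  rw [xg1_eq hx]
  have h := hXY (a := a) hx
  unfold gg Ff
  linear_combination (-(4*a*(a+2))) * h

/-- Identity 2: `x² (2 g g'' - g'²) = W F`. -/
lemma key2 (hx : 0 < x) :
    2 * gg a x * ((x*x) * g2 a x) = (x * g1 a x)^2 + Wf a x * Ff a x := by
  rw [xg1_eq hx, x2g2_eq hx]
  have h := hXY (a := a) hx
  unfold gg Wf Ff
  linear_combination (4*a*(a+2)) * h

lemma Wf_nonneg (ha : 0 < a) (hx : 0 < x) : 0 ≤ Wf a x := by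
  have h2a : (0:ℝ) < 2*a+2 := by linarith
  have hw : a/(2*a+2) + (a+2)/(2*a+2) = 1 := by field_simp; try ring
  have h := Real.geom_mean_le_arith_mean2_weighted
    (by positivity) (by positivity) (Real.rpow_nonneg hx.le (a+2)) (Real.rpow_nonneg hx.le (-a)) hw
  have hg : (x ^ (a+2)) ^ (a/(2*a+2)) * (x ^ (-a)) ^ ((a+2)/(2*a+2)) = 1 := by
    rw [← Real.rpow_mul hx.le, ← Real.rpow_mul hx.le, ← Real.rpow_add hx,
      show (a+2)*(a/(2*a+2)) + -a*((a+2)/(2*a+2)) = 0 by field_simp; try ring, Real.rpow_zero]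
  rw [hg] at h
  have e : (2*a+2) * (a/(2*a+2) * x^(a+2) + (a+2)/(2*a+2) * x^(-a))
      = a * x^(a+2) + (a+2) * x^(-a) := by field_simp; try ring
  unfold Wf
  nlinarith [mul_le_mul_of_nonneg_left h h2a.le]

lemma Ff_nonneg (ha : 0 < a) (hx : 0 < x) : 0 ≤ Ff a x := by
  have h2a : (0:ℝ) < 2*a+2 := by linarith
  have hw : (a+2)/(2*a+2) + a/(2*a+2) = 1 := by field_simp; try ring
  have h := Real.geom_mean_le_arith_mean2_weighted
    (by positivity) (by positivity) (Real.rpow_nonneg hx.le (a+2)) (Real.rpow_nonneg hx.le (-a)) hw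
  have hg : (x ^ (a+2)) ^ ((a+2)/(2*a+2)) * (x ^ (-a)) ^ (a/(2*a+2)) = x * x := by
    rw [← Real.rpow_mul hx.le, ← Real.rpow_mul hx.le, ← Real.rpow_add hx,
      show (a+2)*((a+2)/(2*a+2)) + -a*(a/(2*a+2)) = 2 by field_simp; try ring, rpow_two' hx]
  rw [hg] at h
  have e : (2*a+2) * ((a+2)/(2*a+2) * x^(a+2) + a/(2*a+2) * x^(-a))
      = (a+2) * x^(a+2) + a * x^(-a) := by field_simp; try ring
  unfold Ff
  nlinarith [mul_le_mul_of_nonneg_left h h2a.le]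


lemma g1_key (hx : 0 < x) :
    x^(a+1) * g1 a x = (a+2)*x^(2*a+2) - a - 2*x^(a+2) := by
  have e1 : x^(a+1) * x^(a+1) = x^(2*a+2) := by
    rw [← Real.rpow_add hx]; congr 1; ring
  have e2 : x^(a+1) * x^(-a-1) = 1 := by
    rw [← Real.rpow_add hx, show a+1+(-a-1) = 0 by ring, Real.rpow_zero]
  have e3 := hshiftA (a := a) hx
  unfold g1
  linear_combination (a+2)*e1 - a*e2 - 2*e3

lemma g1_nonneg (ha : 0 < a) (hx1 : 1 ≤ x) : 0 ≤ g1 a x := by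
  have hx : 0 < x := lt_of_lt_of_le one_pos hx1
  have hp : 0 < x^(a+1) := Real.rpow_pos_of_pos hx _
  have h2a : (0:ℝ) < 2*a+2 := by linarith
  have hw : (a+2)/(2*a+2) + a/(2*a+2) = 1 := by field_simp; try ring
  have hAM := Real.geom_mean_le_arith_mean2_weighted
    (by positivity) (by positivity) (Real.rpow_nonneg hx.le (2*a+2)) (zero_le_one) hw
  have hg : (x ^ (2*a+2)) ^ ((a+2)/(2*a+2)) * (1:ℝ) ^ (a/(2*a+2)) = x ^ (a+2) := by
    rw [Real.one_rpow, mul_one, ← Real.rpow_mul hx.le,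
      show (2*a+2)*((a+2)/(2*a+2)) = a+2 by field_simp]
  rw [hg, mul_one] at hAM
  have e : (2*a+2) * ((a+2)/(2*a+2) * x^(2*a+2) + a/(2*a+2)*1)
      = (a+2) * x^(2*a+2) + a := by field_simp
  have hone : (1:ℝ) ≤ x ^ (a+2) := by
    rw [show (1:ℝ) = (1:ℝ)^(a+2) by rw [Real.one_rpow]]
    exact Real.rpow_le_rpow zero_le_one hx1 (by linarith)
  have hkey : 0 ≤ x^(a+1) * g1 a x := by
    rw [g1_key hx]
    nlinarith [mul_le_mul_of_nonneg_left hAM h2a.le]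
  by_contra hneg
  push_neg at hneg
  nlinarith [mul_neg_of_pos_of_neg hp hneg]

lemma g1_nonpos (ha : 0 < a) (hx : 0 < x) (hx1 : x ≤ 1) : g1 a x ≤ 0 := by
  have hp : 0 < x^(a+1) := Real.rpow_pos_of_pos hx _
  have m1 : x^(2*a+2) ≤ x^(a+2) := Real.rpow_le_rpow_of_exponent_ge hx hx1 (by linarith)
  have m2 : x^(a+2) ≤ 1 := Real.rpow_le_one hx.le hx1 (by linarith)
  have hkey : x^(a+1) * g1 a x ≤ 0 := by
    rw [g1_key hx]; nlinarith
  by_contra hneg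
  push_neg at hneg
  nlinarith [mul_pos hp hneg]

/-- `g'² ≥ 4a(a+2) g`. -/
lemma sq_g1_ge (ha : 0 < a) (hx : 0 < x) :
    4*(a*(a+2)) * gg a x ≤ (g1 a x)^2 := by
  have h : (x*x) * ((g1 a x)^2 - 4*(a*(a+2)) * gg a x) = (Ff a x)^2 := by
    linear_combination key1 (a := a) hx
  have hF := sq_nonneg (Ff a x)
  nlinarith [mul_pos hx hx]

/-- `2 g g'' - g'² ≥ 0`. -/
lemma Esign (ha : 0 < a) (hx : 0 < x) :
    0 ≤ 2 * gg a x * g2 a x - (g1 a x)^2 := by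
  have h : (x*x) * (2 * gg a x * g2 a x - (g1 a x)^2) = Wf a x * Ff a x := by
    linear_combination key2 (a := a) hx
  have hWF : 0 ≤ Wf a x * Ff a x := mul_nonneg (Wf_nonneg ha hx) (Ff_nonneg ha hx)
  nlinarith [mul_pos hx hx]

lemma hasDerivAt_df' (ha : 0 < a) (hx : 0 < x) (hne : x ≠ 1) :
    HasDerivAt (df a)
      ((g2 a x * (2*Real.sqrt (gg a x)) - g1 a x * (2 * df a x)) / (2*Real.sqrt (gg a x))^2) x := by
  have hgp := gg_pos ha hx hne
  have hsp : 0 < Real.sqrt (gg a x) := Real.sqrt_pos.2 hgp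
  exact (hasDerivAt_g1 hx).div ((hasDerivAt_sqrt_gg ha hx hne).const_mul 2) (by positivity)

lemma deriv_df_nonneg (ha : 0 < a) (hx : 0 < x) (hne : x ≠ 1) :
    0 ≤ deriv (df a) x := by
  rw [(hasDerivAt_df' ha hx hne).deriv]
  have hgp := gg_pos ha hx hne
  have hsp : 0 < Real.sqrt (gg a x) := Real.sqrt_pos.2 hgp
  have hss : Real.sqrt (gg a x) * Real.sqrt (gg a x) = gg a x := Real.mul_self_sqrt hgp.le
  apply div_nonneg _ (by positivity)
  have e : g1 a x * (2 * df a x) = (g1 a x)^2 / Real.sqrt (gg a x) := by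
    unfold df; field_simp
  rw [e, sub_nonneg, div_le_iff₀ hsp]
  have e2 : g2 a x * (2*Real.sqrt (gg a x)) * Real.sqrt (gg a x) = 2 * gg a x * g2 a x := by
    linear_combination (2 * g2 a x) * hss
  rw [e2]
  linarith [Esign ha hx]

lemma mono_df (ha : 0 < a) : MonotoneOn (df a) (Ioi (1:ℝ)) := by
  apply monotoneOn_of_deriv_nonneg (convex_Ioi 1)
  · intro y hy
    have hy1 : 1 < y := hy
    exact (hasDerivAt_df' ha (lt_trans one_pos hy1) (ne_of_gt hy1)).continuousAt.continuousWithinAt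
  · intro y hy
    rw [interior_Ioi] at hy
    exact (hasDerivAt_df' ha (lt_trans one_pos hy) (ne_of_gt hy)).differentiableAt.differentiableWithinAt
  · intro y hy
    rw [interior_Ioi] at hy
    exact deriv_df_nonneg ha (lt_trans one_pos hy) (ne_of_gt hy)

lemma anti_ndf (ha : 0 < a) : AntitoneOn (fun y => -df a y) (Ioo (0:ℝ) 1) := by
  apply antitoneOn_of_deriv_nonpos (convex_Ioo 0 1)
  · intro y hy
    exact ((hasDerivAt_df' ha hy.1 (ne_of_lt hy.2)).continuousAt.neg).continuousWithinAt
  · intro y hy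
    rw [interior_Ioo] at hy
    exact ((hasDerivAt_df' ha hy.1 (ne_of_lt hy.2)).neg).differentiableAt.differentiableWithinAt
  · intro y hy
    rw [interior_Ioo] at hy
    rw [deriv.fun_neg]
    simpa using deriv_df_nonneg ha hy.1 (ne_of_lt hy.2)

lemma tendsto_prod_slope (ha : 0 < a) :
    Tendsto (fun x : ℝ => ((1 - x^(-a))/(x-1)) * ((x^(a+2)-1)/(x-1)))
      (𝓝[≠] (1:ℝ)) (𝓝 (a*(a+2))) := by
  have h1 : HasDerivAt (fun y : ℝ => y ^ (a+2)) (a+2) 1 := by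
    have h := Real.hasDerivAt_rpow_const (x := (1:ℝ)) (p := a+2) (Or.inl one_ne_zero)
    simpa using h
  have h2 : HasDerivAt (fun y : ℝ => 1 - y ^ (-a)) a 1 := by
    have h := Real.hasDerivAt_rpow_const (x := (1:ℝ)) (p := -a) (Or.inl one_ne_zero)
    have h' := h.const_sub (1:ℝ)
    simpa using h'
  have t1 := hasDerivAt_iff_tendsto_slope.1 h1
  have t2 := hasDerivAt_iff_tendsto_slope.1 h2
  have t := t2.mul t1
  refine t.congr (fun y => ?_)
  rw [slope_def_field, slope_def_field]
  simp [Real.one_rpow]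

lemma sqrt_prod_eq (ha : 0 < a) (hy : 0 < y) (hne : y ≠ 1) :
    Real.sqrt (((1 - y^(-a))/(y-1)) * ((y^(a+2)-1)/(y-1)))
      = Real.sqrt (gg a y) / |y - 1| := by
  rw [show ((1 - y^(-a))/(y-1)) * ((y^(a+2)-1)/(y-1)) = gg a y / (y-1)^2 by
      rw [div_mul_div_comm, ← gg_factor hy, ← pow_two],
    Real.sqrt_div (gg_nonneg ha hy), Real.sqrt_sq_eq_abs]

lemma hdw_right (ha : 0 < a) :
    HasDerivWithinAt (fun y => Real.sqrt (gg a y)) (Real.sqrt (a*(a+2))) (Ici 1) 1 := by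
  rw [hasDerivWithinAt_iff_tendsto_slope, Set.Ici_sdiff_left]
  have t := (tendsto_prod_slope (a := a) ha).mono_left
    (nhdsWithin_mono 1 (fun y (hy : y ∈ Ioi 1) => (ne_of_gt hy : y ≠ 1)))
  have ts := (Real.continuous_sqrt.tendsto (a*(a+2))).comp t
  refine ts.congr' ?_
  filter_upwards [self_mem_nhdsWithin] with y hy
  have hy1 : 1 < y := hy
  have hy0 : 0 < y := lt_trans one_pos hy1
  show Real.sqrt _ = slope (fun y => Real.sqrt (gg a y)) 1 y
  rw [slope_def_field, gg_one, Real.sqrt_zero, sub_zero,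
    sqrt_prod_eq ha hy0 (ne_of_gt hy1), abs_of_pos (by linarith : (0:ℝ) < y - 1)]

lemma hdw_left (ha : 0 < a) :
    HasDerivWithinAt (fun y => -Real.sqrt (gg a y)) (Real.sqrt (a*(a+2))) (Iic 1) 1 := by
  rw [hasDerivWithinAt_iff_tendsto_slope, Set.Iic_diff_right]
  have t := (tendsto_prod_slope (a := a) ha).mono_left
    (nhdsWithin_mono 1 (fun y (hy : y ∈ Iio 1) => (ne_of_lt hy : y ≠ 1)))
  have ts := (Real.continuous_sqrt.tendsto (a*(a+2))).comp t
  refine ts.congr' ?_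
  have hmem : Ioo (0:ℝ) 1 ∈ 𝓝[<] (1:ℝ) :=
    Ioo_mem_nhdsLT_of_mem ⟨one_pos, le_refl 1⟩
  filter_upwards [hmem] with y hy
  show Real.sqrt _ = slope (fun y => -Real.sqrt (gg a y)) 1 y
  rw [slope_def_field, gg_one, Real.sqrt_zero, neg_zero, sub_zero,
    sqrt_prod_eq ha hy.1 (ne_of_lt hy.2), abs_of_neg (by linarith [hy.2] : y - 1 < 0)]
  rw [div_neg, neg_div]

end Aux2


/-- φ← is convex on (0,∞) and φ→ is concave on (0,∞). -/
theorem phiB_convex_phiF_concave (γ : ℝ) (hγ : 1 < γ) :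
    ConvexOn ℝ (Set.Ioi (0 : ℝ)) (phiB γ) ∧
    ConcaveOn ℝ (Set.Ioi (0 : ℝ)) (phiF γ) := by
  have hγ1 : (0:ℝ) < γ - 1 := by linarith
  set a : ℝ := 2/(γ-1) with ha_def
  have ha : 0 < a := by positivity
  have hexp1 : -(1:ℝ)/((γ-1)/2) = -a := by rw [ha_def]; field_simp
  have hexp2 : γ/((γ-1)/2) = a + 2 := by rw [ha_def]; field_simp; ring
  have hshock : ∀ y : ℝ, 0 < y → shockPart γ y = Real.sqrt (Aux2.gg a y) := by
    intro y hy
    unfold shockPart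
    rw [hexp1, hexp2, ← Aux2.gg_factor hy]
  have hka : kappa γ = Real.sqrt (a*(a+2)) := by
    have h1 : a*(a+2) = a^2*γ := by rw [ha_def]; field_simp; ring
    rw [kappa, h1, Real.sqrt_mul (sq_nonneg a), Real.sqrt_sq ha.le, ha_def]
    field_simp
  have hk0 : 0 ≤ kappa γ := by rw [hka]; positivity
  have hksq : kappa γ^2 = a*(a+2) := by
    rw [hka]; exact Real.sq_sqrt (by positivity)
  -- square-comparison helper: κ·2√g ≤ |g'|
  have hbridge : ∀ y : ℝ, 0 < y → y ≠ 1 →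
      kappa γ * (2 * Real.sqrt (Aux2.gg a y)) ≤ |Aux2.g1 a y| := by
    intro y hy hne
    have hgp := Aux2.gg_pos ha hy hne
    have hsp : 0 < Real.sqrt (Aux2.gg a y) := Real.sqrt_pos.2 hgp
    have hss : Real.sqrt (Aux2.gg a y) * Real.sqrt (Aux2.gg a y) = Aux2.gg a y :=
      Real.mul_self_sqrt hgp.le
    have hsq := Aux2.sq_g1_ge (a := a) ha hy
    have habs : |Aux2.g1 a y|^2 = (Aux2.g1 a y)^2 := sq_abs _
    have habs0 : 0 ≤ |Aux2.g1 a y| := abs_nonneg _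
    nlinarith [hksq, hss, hk0, hsp.le, hsq, habs, habs0,
      sq_nonneg (|Aux2.g1 a y| - 2*kappa γ*Real.sqrt (Aux2.gg a y)),
      mul_nonneg hk0 hsp.le]
  ---- phiB : convex ----
  have hder1B : HasDerivAt (phiB γ) (kappa γ) 1 := by
    have hL : HasDerivWithinAt (phiB γ) (kappa γ) (Iic 1) 1 := by
      have h : HasDerivAt (fun y : ℝ => kappa γ * (y - 1)) (kappa γ) 1 := by
        simpa using ((hasDerivAt_id (1:ℝ)).sub_const 1).const_mul (kappa γ)
      exact h.hasDerivWithinAt.congr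
        (fun y hy => by simp only [phiB]; rw [if_pos (show y ≤ 1 from hy)])
        (by simp only [phiB]; rw [if_pos le_rfl])
    have hR : HasDerivWithinAt (phiB γ) (kappa γ) (Ici 1) 1 := by
      have h := Aux2.hdw_right (a := a) ha
      rw [← hka] at h
      refine h.congr (fun y hy => ?_)
        (by simp only [phiB]; rw [if_pos le_rfl, Aux2.gg_one, Real.sqrt_zero]; ring)
      rcases eq_or_lt_of_le (show (1:ℝ) ≤ y from hy) with h1 | h1
      · rw [← h1]
        simp only [phiB]
        rw [if_pos le_rfl, Aux2.gg_one, Real.sqrt_zero]; ring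
      · simp only [phiB]
        rw [if_neg (not_le.2 h1), hshock y (lt_trans one_pos h1)]
    have h := hL.union hR
    rw [Set.Iic_union_Ici] at h
    rwa [hasDerivWithinAt_univ] at h
  have hderB : ∀ x ∈ Ioi (0:ℝ), HasDerivAt (phiB γ)
      (if x ≤ 1 then kappa γ else Aux2.df a x) x := by
    intro x hx
    rcases lt_trichotomy x 1 with h | h | h
    · rw [if_pos h.le]
      have hev : phiB γ =ᶠ[𝓝 x] fun y : ℝ => kappa γ * (y - 1) := by
        filter_upwards [Iio_mem_nhds h] with y hy
        simp only [phiB]; rw [if_pos (show y ≤ 1 from le_of_lt hy)]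
      have hlin : HasDerivAt (fun y : ℝ => kappa γ * (y - 1)) (kappa γ) x := by
        simpa using ((hasDerivAt_id x).sub_const 1).const_mul (kappa γ)
      exact hlin.congr_of_eventuallyEq hev
    · rw [if_pos h.le, h]; exact hder1B
    · rw [if_neg (not_le.2 h)]
      have hx0 : 0 < x := lt_trans one_pos h
      have hev : phiB γ =ᶠ[𝓝 x] fun y : ℝ => Real.sqrt (Aux2.gg a y) := by
        filter_upwards [Ioi_mem_nhds h] with y hy
        simp only [phiB]
        rw [if_neg (not_le.2 (show 1 < y from hy)), hshock y (lt_trans one_pos (show 1 < y from hy))]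
      exact (Aux2.hasDerivAt_sqrt_gg ha hx0 (ne_of_gt h)).congr_of_eventuallyEq hev
  have hmonoB : MonotoneOn (fun x : ℝ => if x ≤ 1 then kappa γ else Aux2.df a x)
      (Ioi (0:ℝ)) := by
    intro x hx y hy hxy
    show (if x ≤ 1 then kappa γ else Aux2.df a x) ≤ (if y ≤ 1 then kappa γ else Aux2.df a y)
    by_cases hx1 : x ≤ 1
    · by_cases hy1 : y ≤ 1
      · rw [if_pos hx1, if_pos hy1]
      · rw [if_pos hx1, if_neg hy1]
        have hy1' : 1 < y := not_le.1 hy1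
        have hy0 : (0:ℝ) < y := lt_trans one_pos hy1'
        have hb := hbridge y hy0 (ne_of_gt hy1')
        rw [abs_of_nonneg (Aux2.g1_nonneg ha hy1'.le)] at hb
        have hsp : 0 < Real.sqrt (Aux2.gg a y) :=
          Real.sqrt_pos.2 (Aux2.gg_pos ha hy0 (ne_of_gt hy1'))
        rw [show Aux2.df a y = Aux2.g1 a y / (2 * Real.sqrt (Aux2.gg a y)) from rfl,
          le_div_iff₀ (by positivity)]
        linarith
    · have hx1' : 1 < x := not_le.1 hx1
      have hy1' : 1 < y := lt_of_lt_of_le hx1' hxy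
      rw [if_neg hx1, if_neg (not_le.2 hy1')]
      exact Aux2.mono_df ha hx1' hy1' hxy
  have hconvB : ConvexOn ℝ (Ioi (0:ℝ)) (phiB γ) := by
    have hmono' : MonotoneOn (deriv (phiB γ)) (interior (Ioi (0:ℝ))) := by
      rw [interior_Ioi]
      intro x hx y hy hxy
      rw [(hderB x hx).deriv, (hderB y hy).deriv]
      exact hmonoB hx hy hxy
    exact hmono'.convexOn_of_deriv (convex_Ioi 0)
      (fun x hx => (hderB x hx).continuousAt.continuousWithinAt)
      (by
        rw [interior_Ioi]
        exact fun x hx => (hderB x hx).differentiableAt.differentiableWithinAt)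
  ---- phiF : concave ----
  have hder1F : HasDerivAt (phiF γ) (kappa γ) 1 := by
    set Phi : ℝ → ℝ :=
      fun y => if y < 1 then -Real.sqrt (Aux2.gg a y) else kappa γ * (y - 1) with hPhi
    have hPhiDer : HasDerivAt Phi (kappa γ) 1 := by
      have hL : HasDerivWithinAt Phi (kappa γ) (Iic 1) 1 := by
        have h := Aux2.hdw_left (a := a) ha
        rw [← hka] at h
        refine h.congr (fun y hy => ?_) ?_
        · rcases eq_or_lt_of_le (show y ≤ 1 from hy) with h1 | h1
          · rw [h1]
            simp only [hPhi]
            rw [if_neg (lt_irrefl 1), Aux2.gg_one, Real.sqrt_zero]; ring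
          · simp only [hPhi]; rw [if_pos h1]
        · simp only [hPhi]
          rw [if_neg (lt_irrefl 1), Aux2.gg_one, Real.sqrt_zero]; ring
      have hR : HasDerivWithinAt Phi (kappa γ) (Ici 1) 1 := by
        have hlin : HasDerivAt (fun y : ℝ => kappa γ * (y - 1)) (kappa γ) 1 := by
          simpa using ((hasDerivAt_id (1:ℝ)).sub_const 1).const_mul (kappa γ)
        exact hlin.hasDerivWithinAt.congr
          (fun y hy => by simp only [hPhi]; rw [if_neg (not_lt.2 (show (1:ℝ) ≤ y from hy))])
          (by simp only [hPhi]; rw [if_neg (lt_irrefl 1)])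
      have h := hL.union hR
      rw [Set.Iic_union_Ici] at h
      rwa [hasDerivWithinAt_univ] at h
    have hev : phiF γ =ᶠ[𝓝 (1:ℝ)] Phi := by
      filter_upwards [Ioi_mem_nhds one_pos] with y hy
      by_cases h1 : y < 1
      · simp only [phiF, hPhi]
        rw [if_pos h1, if_pos h1, hshock y hy]
      · simp only [phiF, hPhi]
        rw [if_neg h1, if_neg h1]
    exact hPhiDer.congr_of_eventuallyEq hev
  have hderF : ∀ x ∈ Ioi (0:ℝ), HasDerivAt (phiF γ)
      (if x < 1 then -Aux2.df a x else kappa γ) x := by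
    intro x hx
    rcases lt_trichotomy x 1 with h | h | h
    · rw [if_pos h]
      have hev : phiF γ =ᶠ[𝓝 x] fun y : ℝ => -Real.sqrt (Aux2.gg a y) := by
        filter_upwards [Ioo_mem_nhds hx h] with y hy
        simp only [phiF]
        rw [if_pos hy.2, hshock y hy.1]
      exact ((Aux2.hasDerivAt_sqrt_gg ha (show (0:ℝ) < x from hx)
        (ne_of_lt h)).neg).congr_of_eventuallyEq hev
    · rw [if_neg (by rw [h]; exact lt_irrefl 1), h]; exact hder1F
    · rw [if_neg (not_lt.2 h.le)]
      have hev : phiF γ =ᶠ[𝓝 x] fun y : ℝ => kappa γ * (y - 1) := by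
        filter_upwards [Ioi_mem_nhds h] with y hy
        simp only [phiF]
        rw [if_neg (not_lt.2 (le_of_lt (show 1 < y from hy)))]
      have hlin : HasDerivAt (fun y : ℝ => kappa γ * (y - 1)) (kappa γ) x := by
        simpa using ((hasDerivAt_id x).sub_const 1).const_mul (kappa γ)
      exact hlin.congr_of_eventuallyEq hev
  have hantiF : AntitoneOn (fun x : ℝ => if x < 1 then -Aux2.df a x else kappa γ)
      (Ioi (0:ℝ)) := by
    intro x hx y hy hxy
    show (if y < 1 then -Aux2.df a y else kappa γ) ≤ (if x < 1 then -Aux2.df a x else kappa γ)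
    by_cases hy1 : y < 1
    · have hx1 : x < 1 := lt_of_le_of_lt hxy hy1
      rw [if_pos hx1, if_pos hy1]
      exact Aux2.anti_ndf ha ⟨hx, hx1⟩ ⟨hy, hy1⟩ hxy
    · by_cases hx1 : x < 1
      · rw [if_pos hx1, if_neg hy1]
        have hb := hbridge x hx (ne_of_lt hx1)
        rw [abs_of_nonpos (Aux2.g1_nonpos ha hx hx1.le)] at hb
        have hsp : 0 < Real.sqrt (Aux2.gg a x) :=
          Real.sqrt_pos.2 (Aux2.gg_pos ha hx (ne_of_lt hx1))
        rw [show Aux2.df a x = Aux2.g1 a x / (2 * Real.sqrt (Aux2.gg a x)) from rfl,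
          ← neg_div, le_div_iff₀ (by positivity)]
        linarith
      · rw [if_neg hx1, if_neg hy1]
  have hconcF : ConcaveOn ℝ (Ioi (0:ℝ)) (phiF γ) := by
    have hanti' : AntitoneOn (deriv (phiF γ)) (interior (Ioi (0:ℝ))) := by
      rw [interior_Ioi]
      intro x hx y hy hxy
      rw [(hderF x hx).deriv, (hderF y hy).deriv]
      exact hantiF hx hy hxy
    exact hanti'.concaveOn_of_deriv (convex_Ioi 0)
      (fun x hx => (hderF x hx).continuousAt.continuousWithinAt)
      (by
        rw [interior_Ioi]
        exact fun x hx => (hderF x hx).differentiableAt.differentiableWithinAt)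
  exact ⟨hconvB, hconcF⟩
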